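/- arXiv:1205.5824 — 2 statements merged into one kernel-verified Lean document; each statement's English description precedes it below -/
import Mathlib

section
/- Let E be symmetric positive-definite, Ă a real n×n matrix with EĂ symmetric, and G an n×k matrix of full column rank. Then the largest eigenvalue of the reduced generalized eigenproblem (GᵀEĂG)v = λ(GᵀEG)v is at most the largest eigenvalue of the full generalized eigenproblem EĂw = λEw, and the smallest eigenvalue of the reduced problem is at least the smallest of the full problem. -/
open Matrix

/-- Spectral decomposition of the quadratic form of a real symmetric matrix. -/
lemma dot_mulVec_spectral {n : ℕ} {S : Matrix (Fin n) (Fin n) ℝ} (hS : S.IsHermitian)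
    (x : Fin n → ℝ) :
    x ⬝ᵥ S *ᵥ x = ∑ i, hS.eigenvalues i *
      ((star hS.eigenvectorUnitary.1 *ᵥ x) i)^2 := by
  set U : Matrix (Fin n) (Fin n) ℝ := hS.eigenvectorUnitary.1
  set y : Fin n → ℝ := star U *ᵥ x with hy
  conv_lhs => rw [hS.spectral_theorem, Unitary.conjStarAlgAut_apply]
  rw [← mulVec_mulVec, ← mulVec_mulVec, dotProduct_mulVec, ← mulVec_transpose]
  have hUT : Uᵀ = star U := by
    simp [Matrix.star_eq_conjTranspose, conjTranspose_eq_transpose_of_trivial]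
  rw [hUT, ← hy]
  simp only [dotProduct, mulVec_diagonal, Function.comp_apply]
  refine Finset.sum_congr rfl fun i _ => ?_
  have : (RCLike.ofReal (hS.eigenvalues i) : ℝ) = hS.eigenvalues i := rfl
  rw [this]; ring

lemma dot_self_spectral {n : ℕ} {S : Matrix (Fin n) (Fin n) ℝ} (hS : S.IsHermitian)
    (x : Fin n → ℝ) :
    x ⬝ᵥ x = ∑ i, ((star hS.eigenvectorUnitary.1 *ᵥ x) i)^2 := by
  set U : Matrix (Fin n) (Fin n) ℝ := hS.eigenvectorUnitary.1
  have h1 : U * star U = 1 := Unitary.mul_star_self_of_mem hS.eigenvectorUnitary.2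
  have : ∑ i, ((star U *ᵥ x) i)^2 = (star U *ᵥ x) ⬝ᵥ (star U *ᵥ x) := by
    simp [dotProduct, sq]
  rw [this, dotProduct_mulVec, ← mulVec_transpose]
  have hUT : (star U)ᵀ = U := by
    simp [Matrix.star_eq_conjTranspose, conjTranspose_eq_transpose_of_trivial]
  rw [hUT, mulVec_mulVec, h1, one_mulVec]

lemma rayleigh_le {n : ℕ} {S : Matrix (Fin n) (Fin n) ℝ} (hS : S.IsHermitian) {c : ℝ}
    (hc : ∀ i, hS.eigenvalues i ≤ c) (x : Fin n → ℝ) :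
    x ⬝ᵥ S *ᵥ x ≤ c * (x ⬝ᵥ x) := by
  rw [dot_mulVec_spectral hS, dot_self_spectral hS, Finset.mul_sum]
  exact Finset.sum_le_sum fun i _ => mul_le_mul_of_nonneg_right (hc i) (sq_nonneg _)

lemma rayleigh_ge {n : ℕ} {S : Matrix (Fin n) (Fin n) ℝ} (hS : S.IsHermitian) {c : ℝ}
    (hc : ∀ i, c ≤ hS.eigenvalues i) (x : Fin n → ℝ) :
    c * (x ⬝ᵥ x) ≤ x ⬝ᵥ S *ᵥ x := by
  rw [dot_mulVec_spectral hS, dot_self_spectral hS, Finset.mul_sum]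
  exact Finset.sum_le_sum fun i _ => mul_le_mul_of_nonneg_right (hc i) (sq_nonneg _)

lemma mulVec_dot {m n : ℕ} (M : Matrix (Fin m) (Fin n) ℝ) (a : Fin n → ℝ) (b : Fin m → ℝ) :
    (M *ᵥ a) ⬝ᵥ b = a ⬝ᵥ (Mᵀ *ᵥ b) := by
  rw [dotProduct_comm, dotProduct_mulVec, ← mulVec_transpose, dotProduct_comm]

open scoped MatrixOrder

/-- Let `E` be symmetric positive-definite, `Ă` a real `n×n` matrix with `E Ă` symmetric,
and `G` an `n×k` matrix of full column rank.  Then every eigenvalue `μ` of the reduced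
generalized eigenproblem `(Gᵀ E Ă G) v = μ (Gᵀ E G) v` lies between the smallest and the
largest eigenvalue of the full generalized eigenproblem `E Ă w = λ E w`: there exist full
eigenvalues `λ ≥ μ` and `λ' ≤ μ`.  In particular the largest reduced eigenvalue is at most
the largest full eigenvalue, and the smallest reduced eigenvalue is at least the smallest
full eigenvalue. -/
theorem reduced_eigenvalues_bounded_by_full
    {n k : ℕ} (E A : Matrix (Fin n) (Fin n) ℝ) (G : Matrix (Fin n) (Fin k) ℝ)
    (hE : E.PosDef) (hEsymm : E.IsSymm) (hEA : (E * A).IsSymm)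
    (hG : ∀ u : Fin k → ℝ, G.mulVec u = 0 → u = 0) :
    ∀ (μ : ℝ) (v : Fin k → ℝ), v ≠ 0 →
      (Gᵀ * E * A * G).mulVec v = μ • (Gᵀ * E * G).mulVec v →
      (∃ (lam : ℝ) (w : Fin n → ℝ), w ≠ 0 ∧ (E * A).mulVec w = lam • E.mulVec w ∧ μ ≤ lam) ∧
      (∃ (lam' : ℝ) (w' : Fin n → ℝ), w' ≠ 0 ∧ (E * A).mulVec w' = lam' • E.mulVec w' ∧ lam' ≤ μ) := by
  intro μ v hv hred
  have hGv : G *ᵥ v ≠ 0 := fun h => hv (hG v h)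
  have hn : 0 < n := by
    rcases Nat.eq_zero_or_pos n with h | h
    · subst h; exact absurd (funext fun i => i.elim0) hGv
    · exact h
  haveI : Nonempty (Fin n) := ⟨⟨0, hn⟩⟩
  set R := CFC.sqrt E with hRdef
  have hRR : R * R = E := CFC.sqrt_mul_sqrt_self E hE.posSemidef.nonneg
  have hRH : R.IsHermitian := (CFC.sqrt_nonneg E).posSemidef.1
  have hRT : Rᵀ = R := by rw [← conjTranspose_eq_transpose_of_trivial]; exact hRH
  have hdet : IsUnit R.det := by
    have h2 : R.det * R.det = E.det := by rw [← det_mul, hRR]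
    refine isUnit_iff_ne_zero.2 fun h0 => ?_
    rw [h0, mul_zero] at h2
    exact hE.det_pos.ne' h2.symm
  have hRinv : R * R⁻¹ = 1 := mul_nonsing_inv R hdet
  have hinvR : R⁻¹ * R = 1 := nonsing_inv_mul R hdet
  have hRinvT : (R⁻¹)ᵀ = R⁻¹ := by rw [transpose_nonsing_inv, hRT]
  set S := R⁻¹ * (E * A) * R⁻¹ with hSdef
  have hST : Sᵀ = S := by
    rw [hSdef, transpose_mul, transpose_mul, hRinvT, hEA]
    simp only [mul_assoc]
  have hSH : S.IsHermitian := by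
    rw [IsHermitian, conjTranspose_eq_transpose_of_trivial, hST]
  have hESA : R * S * R = E * A := by
    have h1 : R * (R⁻¹ * (E * A) * R⁻¹) * R = (R * R⁻¹) * ((E * A) * (R⁻¹ * R)) := by
      noncomm_ring
    rw [hSdef, h1, hRinv, hinvR, one_mul, mul_one]
  -- eigenvectors of S give generalized eigenvectors
  have key : ∀ i : Fin n, ∃ w : Fin n → ℝ, w ≠ 0 ∧
      (E * A).mulVec w = hSH.eigenvalues i • E.mulVec w := by
    intro i
    set u : Fin n → ℝ := ⇑(hSH.eigenvectorBasis i) with hu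
    have hu0 : u ≠ 0 := by
      intro h
      have h2 := hSH.star_eigenvectorUnitary_mulVec i
      rw [← hu, h, mulVec_zero] at h2
      have := congrFun h2 i
      simp [Pi.single_apply] at this
    have hSu : S *ᵥ u = hSH.eigenvalues i • u := hSH.mulVec_eigenvectorBasis i
    refine ⟨R⁻¹ *ᵥ u, ?_, ?_⟩
    · intro h
      have : R *ᵥ (R⁻¹ *ᵥ u) = u := by rw [mulVec_mulVec, hRinv, one_mulVec]
      rw [h, mulVec_zero] at this
      exact hu0 this.symm
    · have hEw : E *ᵥ (R⁻¹ *ᵥ u) = R *ᵥ u := by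
        rw [mulVec_mulVec]
        rw [← hRR, mul_assoc, hRinv, mul_one]
      have hEAw : (E * A) *ᵥ (R⁻¹ *ᵥ u) = hSH.eigenvalues i • (R *ᵥ u) := by
        rw [mulVec_mulVec, ← hESA]
        have : R * S * R * R⁻¹ = R * S := by
          rw [mul_assoc, hRinv, mul_one]
        rw [this, ← mulVec_mulVec, hSu, mulVec_smul]
      rw [hEAw, hEw]
  -- Rayleigh quotient of x = R (G v) equals μ
  set g : Fin n → ℝ := G *ᵥ v with hg
  set x : Fin n → ℝ := R *ᵥ g with hx
  have hq : 0 < g ⬝ᵥ E *ᵥ g := by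
    have := hE.dotProduct_mulVec_pos hGv
    simpa using this
  have hxx : x ⬝ᵥ x = g ⬝ᵥ E *ᵥ g := by
    rw [hx, mulVec_dot, hRT, mulVec_mulVec, hRR, dotProduct_comm, mulVec_dot,
      ← hEsymm.eq, dotProduct_comm]
  have hxSx : x ⬝ᵥ S *ᵥ x = g ⬝ᵥ (E * A) *ᵥ g := by
    rw [hx, mulVec_dot, mulVec_mulVec, mulVec_mulVec, hRT, hESA]
  have hval : g ⬝ᵥ (E * A) *ᵥ g = μ * (g ⬝ᵥ E *ᵥ g) := by
    have h1 : v ⬝ᵥ (Gᵀ * E * A * G) *ᵥ v = g ⬝ᵥ (E * A) *ᵥ g := by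
      have : Gᵀ * E * A * G = Gᵀ * ((E * A) * G) := by simp only [Matrix.mul_assoc]
      rw [this, ← mulVec_mulVec, dotProduct_mulVec, vecMul_transpose, ← hg,
        ← mulVec_mulVec, ← hg]
    have h2 : v ⬝ᵥ (Gᵀ * E * G) *ᵥ v = g ⬝ᵥ E *ᵥ g := by
      have : Gᵀ * E * G = Gᵀ * (E * G) := by simp only [Matrix.mul_assoc]
      rw [this, ← mulVec_mulVec, dotProduct_mulVec, vecMul_transpose, ← hg,
        ← mulVec_mulVec, ← hg]
    rw [← h1, ← h2, hred, dotProduct_smul, smul_eq_mul]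
  constructor
  · obtain ⟨i0, -, hi0⟩ := Finset.exists_mem_eq_sup' Finset.univ_nonempty hSH.eigenvalues
    obtain ⟨w, hw0, hw⟩ := key i0
    refine ⟨hSH.eigenvalues i0, w, hw0, hw, ?_⟩
    have hb := rayleigh_le hSH (c := Finset.univ.sup' Finset.univ_nonempty hSH.eigenvalues)
      (fun i => Finset.le_sup' _ (Finset.mem_univ i)) x
    rw [hxSx, hval, hxx, hi0] at hb
    exact le_of_mul_le_mul_right hb hq
  · obtain ⟨i0, -, hi0⟩ := Finset.exists_mem_eq_inf' Finset.univ_nonempty hSH.eigenvalues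
    obtain ⟨w, hw0, hw⟩ := key i0
    refine ⟨hSH.eigenvalues i0, w, hw0, hw, ?_⟩
    have hb := rayleigh_ge hSH (c := Finset.univ.inf' Finset.univ_nonempty hSH.eigenvalues)
      (fun i => Finset.inf'_le _ (Finset.mem_univ i)) x
    rw [hxSx, hval, hxx, hi0] at hb
    exact le_of_mul_le_mul_right hb hq
end

section
/- The 4×4 plane-strain compliance matrix S_plane is symmetric, and it is positive-definite provided c₁₁ > 0, c₅₅ > 0, M > 0, and c₁₁c₃₃ − c₁₃² > 0. -/
open Matrix

private lemma sq_div_nonpos_eq_zero {a c : ℝ} (hc : 0 < c) (h : a ^ 2 / c ≤ 0) :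
    a = 0 := by
  have hle : a ^ 2 ≤ 0 := by
    rcases div_nonpos_iff.mp h with ⟨h1, h2⟩ | ⟨h1, h2⟩ <;> nlinarith [sq_nonneg a]
  exact pow_eq_zero_iff two_ne_zero |>.mp (le_antisymm hle (sq_nonneg a))

/-- The 4×4 plane-strain compliance matrix `S_plane` is symmetric, and it is
positive-definite provided `c₁₁ > 0`, `c₅₅ > 0`, `M > 0`, and `c₁₁c₃₃ − c₁₃² > 0`. -/
theorem splane_symm_posDef
    (c11 c13 c33 c55 a1 a3 M d : ℝ)
    (hd : d = c11 * c33 - c13 ^ 2)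
    (hc11 : 0 < c11) (hc55 : 0 < c55) (hM : 0 < M) (hdpos : 0 < d)
    (S : Matrix (Fin 4) (Fin 4) ℝ)
    (hS : S = !![c33/d, -c13/d, 0, (a1*c33 - a3*c13)/d;
                 -c13/d, c11/d, 0, (a3*c11 - a1*c13)/d;
                 0, 0, 1/c55, 0;
                 (a1*c33 - a3*c13)/d, (a3*c11 - a1*c13)/d, 0,
                   1/M + (a1^2*c33 + a3^2*c11 - 2*a1*a3*c13)/d]) :
    S.IsSymm ∧ S.PosDef := by
  have hsymm : S.IsSymm := by
    rw [Matrix.IsSymm, hS]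
    ext i j
    fin_cases i <;> fin_cases j <;> simp
  have hherm : S.IsHermitian := by
    rw [Matrix.IsHermitian, Matrix.conjTranspose]
    exact Matrix.isHermitian_iff_isSymm.mpr hsymm
  refine ⟨hsymm, Matrix.posDef_iff_dotProduct_mulVec.mpr ⟨hherm, ?_⟩⟩
  intro x hx
  have hcd : 0 < c11 * d := mul_pos hc11 hdpos
  have hdne : d ≠ 0 := ne_of_gt hdpos
  have hQ : dotProduct (star x) (S *ᵥ x) =
      (c11*(x 1 + a3*x 3) - c13*(x 0 + a1*x 3))^2/(c11*d)
        + (x 0 + a1*x 3)^2/c11 + (x 2)^2/c55 + (x 3)^2/M := by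
    subst hS hd
    simp [Matrix.mulVec, dotProduct, Fin.sum_univ_four]
    field_simp
    ring_nf
    field_simp
    ring
  rw [hQ]
  by_contra hle
  push_neg at hle
  have t1 : 0 ≤ (c11*(x 1 + a3*x 3) - c13*(x 0 + a1*x 3))^2/(c11*d) := by positivity
  have t2 : 0 ≤ (x 0 + a1*x 3)^2/c11 := by positivity
  have t3 : 0 ≤ (x 2)^2/c55 := by positivity
  have t4 : 0 ≤ (x 3)^2/M := by positivity
  have h4 : x 3 = 0 := sq_div_nonpos_eq_zero hM (by linarith)
  have h3 : x 2 = 0 := sq_div_nonpos_eq_zero hc55 (by linarith)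
  have h1 : x 0 = 0 := by
    have := sq_div_nonpos_eq_zero hc11 (a := x 0 + a1*x 3) (by linarith)
    rw [h4] at this; linarith
  have h2 : x 1 = 0 := by
    have := sq_div_nonpos_eq_zero hcd
      (a := c11*(x 1 + a3*x 3) - c13*(x 0 + a1*x 3)) (by linarith)
    rw [h4, h1] at this
    have hc : c11 * x 1 = 0 := by linarith
    rcases mul_eq_zero.mp hc with h | h
    · linarith
    · exact h
  apply hx
  ext i
  fin_cases i <;> simp [h1, h2, h3, h4]
end
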